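/- Let R = (ZMod 2)[y_1,…,y_n] with ideal I generated by y_i^2 - Σ_{j<i} c_{j,i} y_i y_j, and w = Π_{j=2}^n (1 + Σ_{i<j} c_{i,j} y_i) ∈ R/I. Assume Σ_{j=i+1}^n c_{i,j} = 0 for every i (orientability). Then the degree-2 component of w equals Σ_{1≤j<k≤n-2} ( Σ_{r=j+1}^n Σ_{s=k+1, s≠r}^n c_{j,r} c_{k,s} + c_{j,k} Σ_{k+1≤r<s≤n} c_{k,r} c_{k,s} ) · y_j y_k, and this vanishes iff each coefficient Σ_{r=j+1}^n Σ_{s=k+1, s≠r}^n c_{j,r} c_{k,s} + c_{j,k} Σ_{k+1≤r<s≤n} c_{k,r} c_{k,s} = 0 in ZMod 2 for all 1 ≤ j < k ≤ n-2. -/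

import Mathlib

open MvPolynomial
open Finset

/-- The ideal `I = (y_i² - ∑_{j<i} c_{j,i} y_i y_j : 1 ≤ i ≤ n)` in
`(ℤ/2)[y_1, …, y_n]` defining the mod-2 cohomology of a real Bott tower. -/
noncomputable def bottIdeal (n : ℕ) (c : Fin n → Fin n → ZMod 2) :
    Ideal (MvPolynomial (Fin n) (ZMod 2)) :=
  Ideal.span {p | ∃ i : Fin n,
    p = X i ^ 2 - ∑ j ∈ Finset.univ.filter (fun j => j < i), C (c j i) * (X i * X j)}

/-- The polynomial representative `w = ∏_{j=2}^n (1 + ∑_{i<j} c_{i,j} y_i)` of the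
total Stiefel–Whitney class of the real Bott tower. -/
noncomputable def bottSW (n : ℕ) (c : Fin n → Fin n → ZMod 2) :
    MvPolynomial (Fin n) (ZMod 2) :=
  ∏ j ∈ Finset.univ.filter (fun j : Fin n => 0 < j.val),
    (1 + ∑ i ∈ Finset.univ.filter (fun i => i < j), C (c i j) * X i)

/-- The coefficient of `y_j y_k` in `w₂`:
`∑_{r=j+1}^n ∑_{s=k+1, s≠r}^n c_{j,r} c_{k,s} + c_{j,k} ∑_{k+1≤r<s≤n} c_{k,r} c_{k,s}`. -/
def spinCoeff (n : ℕ) (c : Fin n → Fin n → ZMod 2) (j k : Fin n) : ZMod 2 :=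
  (∑ r ∈ Finset.univ.filter (fun r => j < r),
    ∑ s ∈ Finset.univ.filter (fun s => k < s ∧ s ≠ r), c j r * c k s) +
  c j k * ∑ r ∈ Finset.univ.filter (fun r => k < r),
    ∑ s ∈ Finset.univ.filter (fun s => r < s), c k r * c k s



section HC
variable {σ : Type*} {R : Type*} [CommSemiring R]

theorem hc_mul {f : MvPolynomial σ R} {e : ℕ} (hf : f.IsHomogeneous e)
    (P : MvPolynomial σ R) (m : ℕ) :
    homogeneousComponent (e + m) (f * P) = f * homogeneousComponent m P := by
  conv_lhs => rw [← sum_homogeneousComponent P, Finset.mul_sum, map_sum]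
  rw [Finset.sum_congr rfl fun d _ => homogeneousComponent_of_mem
    ((mem_homogeneousSubmodule _ _).mpr (hf.mul (homogeneousComponent_isHomogeneous d P)))]
  simp only [add_right_inj]
  rw [Finset.sum_ite_eq]
  split_ifs with h
  · rfl
  · rw [homogeneousComponent_eq_zero _ _
      (by simp only [Finset.mem_range, not_lt] at h; omega), mul_zero]

theorem hc_mul_lt {f : MvPolynomial σ R} {e : ℕ} (hf : f.IsHomogeneous e)
    (P : MvPolynomial σ R) {m : ℕ} (hm : m < e) :
    homogeneousComponent m (f * P) = 0 := by
  conv_lhs => rw [← sum_homogeneousComponent P, Finset.mul_sum, map_sum]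
  rw [Finset.sum_congr rfl fun d _ => homogeneousComponent_of_mem
    ((mem_homogeneousSubmodule _ _).mpr (hf.mul (homogeneousComponent_isHomogeneous d P)))]
  exact Finset.sum_eq_zero fun d _ => if_neg (by omega)

theorem coeff_mul_homog2 {σ : Type*} [DecidableEq σ] {R : Type*} [CommSemiring R]
    {g : MvPolynomial σ R} (hg : g.IsHomogeneous 2) (f : MvPolynomial σ R)
    {m : σ →₀ ℕ} (hm : m.degree = 2) :
    coeff m (f * g) = coeff 0 f * coeff m g := by
  rw [coeff_mul]
  refine Finset.sum_eq_single (0, m) ?_ ?_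
  · rintro ⟨u, v⟩ huv hne
    have huvm : u + v = m := Finset.HasAntidiagonal.mem_antidiagonal.mp huv
    by_cases hv : v.degree = 2
    · exfalso
      have hdadd : (u + v).degree = u.degree + v.degree := by
        simp only [Finsupp.degree_eq_weight_one, map_add]
      have hu0 : u.degree = 0 := by rw [huvm, hm] at hdadd; omega
      have : u = 0 := (Finsupp.degree_eq_zero_iff u).mp hu0
      subst this
      rw [zero_add] at huvm
      exact hne (by rw [huvm])
    · rw [hg.coeff_eq_zero hv, mul_zero]
  · intro h
    exact absurd (Finset.HasAntidiagonal.mem_antidiagonal.mpr (zero_add m)) h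

theorem degree_add' {σ : Type*} (u v : σ →₀ ℕ) :
    (u + v).degree = u.degree + v.degree := by
  simp only [Finsupp.degree_eq_weight_one, map_add]

theorem degree_single' {σ : Type*} (a : σ) (b : ℕ) :
    (Finsupp.single a b).degree = b := by
  by_cases hb : b = 0
  · subst hb
    rw [Finsupp.single_zero, map_zero]
  · rw [Finsupp.degree_apply, Finsupp.support_single_ne_zero _ hb, Finset.sum_singleton,
      Finsupp.single_eq_same]

theorem CXX {σ : Type*} {R : Type*} [CommSemiring R] (r : R) (a b : σ) :
    C r * (X a * X b) = monomial (Finsupp.single a 1 + Finsupp.single b 1) r := by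
  have hx : ∀ t : σ, (X t : MvPolynomial σ R) = monomial (Finsupp.single t 1) 1 :=
    fun t => rfl
  rw [hx, hx, monomial_mul, one_mul, C_mul_monomial, mul_one]

variable {ι : Type*} [LinearOrder ι]

theorem hc0_prod (Lf : ι → MvPolynomial σ R) (hL : ∀ j, (Lf j).IsHomogeneous 1)
    (T : Finset ι) : homogeneousComponent 0 (∏ j ∈ T, (1 + Lf j)) = 1 := by
  induction T using Finset.induction_on with
  | empty =>
    rw [Finset.prod_empty, homogeneousComponent_of_mem
      ((mem_homogeneousSubmodule _ _).mpr (isHomogeneous_one _ _)), if_pos rfl]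
  | @insert _ _ ha ih =>
    rw [Finset.prod_insert ha, one_add_mul, map_add, ih,
      hc_mul_lt (hL _) _ zero_lt_one, add_zero]

theorem hc1_prod (Lf : ι → MvPolynomial σ R) (hL : ∀ j, (Lf j).IsHomogeneous 1)
    (T : Finset ι) :
    homogeneousComponent 1 (∏ j ∈ T, (1 + Lf j)) = ∑ j ∈ T, Lf j := by
  induction T using Finset.induction_on with
  | empty =>
    rw [Finset.prod_empty, Finset.sum_empty, homogeneousComponent_of_mem
      ((mem_homogeneousSubmodule _ _).mpr (isHomogeneous_one _ _)), if_neg one_ne_zero]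
  | @insert a s ha ih =>
    have h1 : homogeneousComponent 1 (Lf a * ∏ j ∈ s, (1 + Lf j)) = Lf a := by
      have h := hc_mul (hL a) (∏ j ∈ s, (1 + Lf j)) 0
      rw [show (1:ℕ) = 1 + 0 from rfl, h, hc0_prod Lf hL, mul_one]
    rw [Finset.prod_insert ha, one_add_mul, map_add, ih, h1, Finset.sum_insert ha, add_comm]

theorem hc2_prod (Lf : ι → MvPolynomial σ R) (hL : ∀ j, (Lf j).IsHomogeneous 1)
    (T : Finset ι) :
    homogeneousComponent 2 (∏ j ∈ T, (1 + Lf j)) =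
      ∑ j ∈ T, ∑ k ∈ T.filter (fun k => j < k), Lf j * Lf k := by
  induction T using Finset.induction_on_max with
  | empty =>
    rw [Finset.prod_empty, Finset.sum_empty, homogeneousComponent_of_mem
      ((mem_homogeneousSubmodule _ _).mpr (isHomogeneous_one _ _)), if_neg (by decide)]
  | insert a s hmax ih =>
    have ha : a ∉ s := fun h => lt_irrefl a (hmax a h)
    have h2 : homogeneousComponent 2 (Lf a * ∏ j ∈ s, (1 + Lf j)) =
        Lf a * ∑ j ∈ s, Lf j := by
      have h := hc_mul (hL a) (∏ j ∈ s, (1 + Lf j)) 1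
      rw [show (2:ℕ) = 1 + 1 from rfl, h, hc1_prod Lf hL]
    rw [Finset.prod_insert ha, one_add_mul, map_add, ih, h2, Finset.sum_insert ha]
    have hfa : (insert a s).filter (fun k => a < k) = ∅ := by
      refine Finset.filter_eq_empty_iff.mpr ?_
      intro x hx
      rcases Finset.mem_insert.mp hx with rfl | hx
      · exact lt_irrefl _
      · exact fun h => absurd (hmax x hx) (asymm h)
    rw [hfa, Finset.sum_empty, zero_add]
    have hfj : ∀ j ∈ s, (insert a s).filter (fun k => j < k)
        = insert a (s.filter (fun k => j < k)) := by
      intro j hj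
      rw [Finset.filter_insert, if_pos (hmax j hj)]
    have hrw : ∑ j ∈ s, ∑ k ∈ (insert a s).filter (fun k => j < k), Lf j * Lf k
        = ∑ j ∈ s, (Lf j * Lf a + ∑ k ∈ s.filter (fun k => j < k), Lf j * Lf k) :=
      Finset.sum_congr rfl fun j hj => by
        rw [hfj j hj, Finset.sum_insert (fun h => ha (Finset.mem_of_mem_filter a h))]
    rw [hrw, Finset.sum_add_distrib, Finset.mul_sum]
    rw [Finset.sum_congr rfl fun j (_ : j ∈ s) => mul_comm (Lf a) (Lf j)]
    ring

end HC

section Sums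
variable {ι : Type*} [Fintype ι] [LinearOrder ι] {M : Type*} [AddCommMonoid M]

/-- Swap a "lower-triangle" double sum into an "upper-triangle" one. -/
theorem sum_swap_lt (F : ι → ι → M) :
    ∑ a : ι, ∑ b ∈ univ.filter (fun b => b < a), F a b
      = ∑ a : ι, ∑ b ∈ univ.filter (fun b => a < b), F b a := by
  simp only [Finset.sum_filter]
  exact Finset.sum_comm

/-- Split a full double sum into upper triangle (symmetrized) and diagonal. -/
theorem sum_split_pairs (F : ι → ι → M) :
    ∑ a : ι, ∑ b : ι, F a b
      = ∑ a : ι, ∑ b ∈ univ.filter (fun b => a < b), (F a b + F b a)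
        + ∑ a : ι, F a a := by
  have h1 : ∀ a : ι, ∑ b : ι, F a b
      = ∑ b ∈ univ.filter (fun b => a < b), F a b
        + (∑ b ∈ univ.filter (fun b => b < a), F a b + F a a) := by
    intro a
    rw [← Finset.sum_filter_add_sum_filter_not univ (fun b => a < b) (F a)]
    congr 1
    rw [← Finset.sum_filter_add_sum_filter_not (univ.filter (fun b => ¬ a < b))
      (fun b => b < a) (F a), Finset.filter_filter, Finset.filter_filter]
    congr 1
    · refine Finset.sum_congr ?_ fun _ _ => rfl
      ext b
      simp only [mem_filter, mem_univ, true_and]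
      exact ⟨fun h => h.2, fun h => ⟨not_lt.mpr h.le, h⟩⟩
    · have hs : Finset.filter (fun b => ¬a < b ∧ ¬b < a) univ = {a} := by
        ext b
        simp only [mem_filter, mem_univ, true_and, mem_singleton, not_lt]
        exact ⟨fun ⟨h1, h2⟩ => le_antisymm h1 h2, fun h => by subst h; exact ⟨le_refl _, le_refl _⟩⟩
      rw [hs, Finset.sum_singleton]
  rw [Finset.sum_congr rfl fun a _ => h1 a, Finset.sum_add_distrib, Finset.sum_add_distrib,
    sum_swap_lt, ← add_assoc, ← Finset.sum_add_distrib]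
  congr 1
  exact Finset.sum_congr rfl fun a _ => (Finset.sum_add_distrib).symm

end Sums


section Core
variable {n : ℕ} (c : Fin n → Fin n → ZMod 2)

/-- the linear factor -/
noncomputable def Lp (j : Fin n) : MvPolynomial (Fin n) (ZMod 2) :=
  ∑ i ∈ Finset.univ.filter (fun i => i < j), C (c i j) * X i

def Wf (a b : Fin n) : ZMod 2 :=
  ∑ j : Fin n, ∑ k : Fin n, (if a < j ∧ b < k ∧ j < k then c a j * c b k else 0)

def Af (a b : Fin n) : ZMod 2 :=
  ∑ r ∈ Finset.univ.filter (fun r => a < r),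
    ∑ s ∈ Finset.univ.filter (fun s => b < s ∧ s ≠ r), c a r * c b s

def Qf (k : Fin n) : ZMod 2 :=
  ∑ r ∈ Finset.univ.filter (fun r => k < r),
    ∑ s ∈ Finset.univ.filter (fun s => r < s), c k r * c k s

theorem spinCoeff_eq (j k : Fin n) : spinCoeff n c j k = Af c j k + c j k * Qf c k := rfl

theorem Lp_hom (j : Fin n) : (Lp c j).IsHomogeneous 1 :=
  (mem_homogeneousSubmodule _ _).mp (Submodule.sum_mem _ fun i _ =>
    (mem_homogeneousSubmodule _ _).mpr (isHomogeneous_C_mul_X _ _))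

theorem scalar2 (a : Fin n) : Wf c a a = Qf c a := by
  unfold Wf Qf
  simp only [Finset.sum_filter]
  refine Finset.sum_congr rfl fun j _ => ?_
  by_cases ha : a < j
  · rw [if_pos ha]
    refine Finset.sum_congr rfl fun k _ => ?_
    exact if_congr ⟨fun h => h.2.2, fun h => ⟨ha, ha.trans h, h⟩⟩ rfl rfl
  · rw [if_neg ha]
    exact Finset.sum_eq_zero fun k _ => if_neg (by tauto)

theorem scalar1 (a b : Fin n) : Wf c a b + Wf c b a = Af c a b := by
  unfold Wf Af
  rw [show (∑ j : Fin n, ∑ k : Fin n, (if b < j ∧ a < k ∧ j < k then c b j * c a k else 0))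
      = ∑ k : Fin n, ∑ j : Fin n, (if b < j ∧ a < k ∧ j < k then c b j * c a k else 0)
    from Finset.sum_comm]
  rw [← Finset.sum_add_distrib]
  simp only [Finset.sum_filter]
  refine Finset.sum_congr rfl fun r _ => ?_
  rw [← Finset.sum_add_distrib]
  by_cases h1 : a < r
  · rw [if_pos h1]
    refine Finset.sum_congr rfl fun s _ => ?_
    by_cases h2 : b < s
    · rcases lt_trichotomy r s with h | h | h
      · rw [if_pos ⟨h1, h2, h⟩, if_neg (by rintro ⟨_, _, h'⟩; exact absurd h (asymm h')),
          if_pos ⟨h2, h.ne'⟩, add_zero]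
      · rw [if_neg (by rintro ⟨_, _, h'⟩; exact absurd h' (by simp [h])),
          if_neg (by rintro ⟨_, _, h'⟩; exact absurd h' (by simp [h])),
          if_neg (by rintro ⟨_, h'⟩; exact h' h.symm), add_zero]
      · rw [if_neg (by rintro ⟨_, _, h'⟩; exact absurd h (asymm h')),
          if_pos ⟨h2, h1, h⟩, if_pos ⟨h2, h.ne⟩, zero_add, mul_comm]
    · rw [if_neg (by tauto), if_neg (by tauto), if_neg (by tauto), add_zero]
  · rw [if_neg h1]
    exact Finset.sum_eq_zero fun s _ => by
      rw [if_neg (by tauto), if_neg (by tauto), add_zero]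


theorem hSW :
    homogeneousComponent 2 (bottSW n c)
      = ∑ j : Fin n, ∑ k ∈ Finset.univ.filter (fun k => j < k), Lp c j * Lp c k := by
  have h := hc2_prod (Lp c) (Lp_hom c) (Finset.univ.filter (fun j : Fin n => 0 < j.val))
  have hb : bottSW n c = ∏ j ∈ Finset.univ.filter (fun j : Fin n => 0 < j.val),
      (1 + Lp c j) := rfl
  rw [hb, h]
  rw [← Finset.sum_filter_add_sum_filter_not Finset.univ (fun j : Fin n => 0 < j.val)
    (fun j => ∑ k ∈ Finset.univ.filter (fun k => j < k), Lp c j * Lp c k)]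
  have hz : ∑ j ∈ Finset.univ.filter (fun j : Fin n => ¬ 0 < j.val),
      ∑ k ∈ Finset.univ.filter (fun k => j < k), Lp c j * Lp c k = 0 := by
    refine Finset.sum_eq_zero fun j hj => Finset.sum_eq_zero fun k _ => ?_
    have hj0 : j.val = 0 := by
      have := (Finset.mem_filter.mp hj).2; omega
    have hLz : Lp c j = 0 := by
      unfold Lp
      rw [Finset.filter_eq_empty_iff.mpr, Finset.sum_empty]
      intro i _
      rw [Fin.lt_def, hj0]
      omega
    rw [hLz, zero_mul]
  rw [hz, add_zero]
  refine Finset.sum_congr rfl fun j hj => ?_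
  have hj0 : 0 < j.val := (Finset.mem_filter.mp hj).2
  rw [Finset.filter_filter]
  refine Finset.sum_congr ?_ fun _ _ => rfl
  ext k
  simp only [Finset.mem_filter, Finset.mem_univ, true_and, and_iff_right_iff_imp]
  intro hjk
  have := hjk
  rw [Fin.lt_def] at this
  omega

theorem step1 :
    (∑ j : Fin n, ∑ k ∈ Finset.univ.filter (fun k => j < k), Lp c j * Lp c k)
      = ∑ a : Fin n, ∑ b : Fin n, C (Wf c a b) * (X a * X b) := by
  -- normal form N
  have lhsN : (∑ j : Fin n, ∑ k ∈ Finset.univ.filter (fun k => j < k), Lp c j * Lp c k)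
      = ∑ j : Fin n, ∑ k : Fin n, ∑ a : Fin n, ∑ b : Fin n,
          (if a < j ∧ b < k ∧ j < k then C (c a j * c b k) * (X a * X b) else 0) := by
    simp only [Finset.sum_filter]
    refine Finset.sum_congr rfl fun j _ => Finset.sum_congr rfl fun k _ => ?_
    by_cases h : j < k
    · rw [if_pos h]
      unfold Lp
      rw [Finset.sum_mul_sum]
      simp only [Finset.sum_filter]
      refine Finset.sum_congr rfl fun a _ => ?_
      by_cases ha : a < j
      · rw [if_pos ha]
        refine Finset.sum_congr rfl fun b _ => ?_
        by_cases hb : b < k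
        · rw [if_pos hb, if_pos ⟨ha, hb, h⟩, map_mul]
          ring
        · rw [if_neg hb, if_neg (by tauto)]
      · rw [if_neg ha]
        exact (Finset.sum_eq_zero fun b _ => if_neg (by tauto)).symm
    · rw [if_neg h]
      exact (Finset.sum_eq_zero fun a _ => Finset.sum_eq_zero fun b _ =>
        if_neg (by tauto)).symm
  have rhsN : (∑ a : Fin n, ∑ b : Fin n, C (Wf c a b) * (X a * X b))
      = ∑ a : Fin n, ∑ b : Fin n, ∑ j : Fin n, ∑ k : Fin n,
          (if a < j ∧ b < k ∧ j < k then C (c a j * c b k) * (X a * X b) else 0) := by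
    refine Finset.sum_congr rfl fun a _ => Finset.sum_congr rfl fun b _ => ?_
    unfold Wf
    rw [map_sum, Finset.sum_mul]
    refine Finset.sum_congr rfl fun j _ => ?_
    rw [map_sum, Finset.sum_mul]
    refine Finset.sum_congr rfl fun k _ => ?_
    split_ifs with h
    · rfl
    · rw [map_zero, zero_mul]
  rw [lhsN, rhsN]
  -- reorder the four sums : j k a b → a b j k
  rw [Finset.sum_congr rfl fun j (_ : j ∈ Finset.univ) => Finset.sum_comm]
  rw [Finset.sum_comm]
  rw [Finset.sum_congr rfl fun a (_ : a ∈ Finset.univ) =>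
    Finset.sum_congr rfl fun j (_ : j ∈ Finset.univ) => Finset.sum_comm]
  rw [Finset.sum_congr rfl fun a (_ : a ∈ Finset.univ) => Finset.sum_comm]

theorem E1 :
    homogeneousComponent 2 (bottSW n c)
      = ∑ a : Fin n, ∑ b ∈ Finset.univ.filter (fun b => a < b),
          C (Af c a b) * (X a * X b)
        + ∑ a : Fin n, C (Qf c a) * (X a ^ 2) := by
  rw [hSW, step1, sum_split_pairs (fun a b => C (Wf c a b) * (X a * X b))]
  congr 1
  · refine Finset.sum_congr rfl fun a _ => Finset.sum_congr rfl fun b _ => ?_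
    rw [← scalar1 c a b, map_add, add_mul, mul_comm (X b) (X a)]
  · refine Finset.sum_congr rfl fun a _ => ?_
    rw [scalar2, sq]

theorem E2 :
    (∑ a : Fin n, ∑ b ∈ Finset.univ.filter (fun b => a < b), C (Af c a b) * (X a * X b))
      + ∑ a : Fin n, C (Qf c a) *
          (∑ p ∈ Finset.univ.filter (fun p => p < a), C (c p a) * (X a * X p))
      = ∑ j : Fin n, ∑ k ∈ Finset.univ.filter (fun k => j < k),
          C (spinCoeff n c j k) * (X j * X k) := by
  have h2 : (∑ a : Fin n, C (Qf c a) *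
        (∑ p ∈ Finset.univ.filter (fun p => p < a), C (c p a) * (X a * X p)))
      = ∑ a : Fin n, ∑ b ∈ Finset.univ.filter (fun b => a < b),
          C (Qf c b) * (C (c a b) * (X b * X a)) := by
    rw [Finset.sum_congr rfl fun a (_ : a ∈ Finset.univ) => Finset.mul_sum
      (Finset.univ.filter (fun p => p < a)) (fun p => C (c p a) * (X a * X p)) (C (Qf c a))]
    exact sum_swap_lt (fun a p => C (Qf c a) * (C (c p a) * (X a * X p)))
  rw [h2, ← Finset.sum_add_distrib]
  refine Finset.sum_congr rfl fun j _ => ?_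
  rw [← Finset.sum_add_distrib]
  refine Finset.sum_congr rfl fun k _ => ?_
  rw [spinCoeff_eq, map_add, add_mul, map_mul]
  ring

theorem spin_vanish (horient : ∀ i : Fin n,
      (∑ j ∈ Finset.univ.filter (fun j => i < j), c i j) = 0)
    (j k : Fin n) (hjk : j < k) (hk2 : ¬ k.val + 2 < n) : spinCoeff n c j k = 0 := by
  rw [spinCoeff_eq]
  by_cases hk1 : k.val + 1 = n
  · have h1 : ∀ r : Fin n, ¬ k < r := by
      intro r hr
      rw [Fin.lt_def] at hr
      have := r.isLt
      omega
    have hA : Af c j k = 0 :=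
      Finset.sum_eq_zero fun r _ => Finset.sum_eq_zero fun s hs =>
        absurd ((Finset.mem_filter.mp hs).2.1) (h1 s)
    have hQ : Qf c k = 0 :=
      Finset.sum_eq_zero fun r hr => absurd ((Finset.mem_filter.mp hr).2) (h1 r)
    rw [hA, hQ, mul_zero, add_zero]
  · have hkn : k.val + 2 = n := by
      have := k.isLt
      omega
    have hnpos : n - 1 < n := by omega
    set t : Fin n := ⟨n - 1, hnpos⟩ with ht
    have hct : c k t = 0 := by
      have h := horient k
      have hft : Finset.univ.filter (fun r => k < r) = {t} := by
        ext r
        simp only [Finset.mem_filter, Finset.mem_univ, true_and, Finset.mem_singleton]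
        constructor
        · intro hkr
          apply Fin.ext
          rw [Fin.lt_def] at hkr
          have := r.isLt
          show r.val = n - 1
          omega
        · rintro rfl
          rw [Fin.lt_def]
          show k.val < n - 1
          omega
      rw [hft, Finset.sum_singleton] at h
      exact h
    have hA : Af c j k = 0 := by
      refine Finset.sum_eq_zero fun r _ => Finset.sum_eq_zero fun s hs => ?_
      have hks : k < s := (Finset.mem_filter.mp hs).2.1
      have hst : s = t := by
        apply Fin.ext
        rw [Fin.lt_def] at hks
        have := s.isLt
        show s.val = n - 1
        omega
      rw [hst, hct, mul_zero]
    have hQ : Qf c k = 0 := by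
      refine Finset.sum_eq_zero fun r hr => Finset.sum_eq_zero fun s hs => ?_
      have hkr : k < r := (Finset.mem_filter.mp hr).2
      have hrs : r < s := (Finset.mem_filter.mp hs).2
      rw [Fin.lt_def] at hkr hrs
      have := s.isLt
      omega
    rw [hA, hQ, mul_zero, add_zero]

theorem E3 (horient : ∀ i : Fin n,
      (∑ j ∈ Finset.univ.filter (fun j => i < j), c i j) = 0) :
    (∑ j : Fin n, ∑ k ∈ Finset.univ.filter (fun k => j < k),
        C (spinCoeff n c j k) * (X j * X k))
      = ∑ j : Fin n, ∑ k ∈ Finset.univ.filter (fun k => j < k ∧ k.val + 2 < n),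
          C (spinCoeff n c j k) * (X j * X k) := by
  refine Finset.sum_congr rfl fun j _ => ?_
  rw [← Finset.sum_filter_add_sum_filter_not (Finset.univ.filter (fun k => j < k))
    (fun k => k.val + 2 < n), Finset.filter_filter, Finset.filter_filter]
  have hz : ∑ k ∈ Finset.univ.filter (fun k => j < k ∧ ¬ k.val + 2 < n),
      C (spinCoeff n c j k) * (X j * X k) = 0:= by
    refine Finset.sum_eq_zero fun k hk => ?_
    obtain ⟨hjk, hk2⟩ := (Finset.mem_filter.mp hk).2
    rw [spin_vanish c horient j k hjk hk2, map_zero, zero_mul]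
  rw [hz, add_zero]

theorem part1 (horient : ∀ i : Fin n,
      (∑ j ∈ Finset.univ.filter (fun j => i < j), c i j) = 0) :
    Ideal.Quotient.mk (bottIdeal n c)
        (MvPolynomial.homogeneousComponent 2 (bottSW n c)) =
      Ideal.Quotient.mk (bottIdeal n c)
        (∑ j : Fin n, ∑ k ∈ Finset.univ.filter (fun k => j < k ∧ k.val + 2 < n),
          C (spinCoeff n c j k) * (X j * X k)) := by
  rw [E1, ← E3 c horient, ← E2, map_add, map_add]
  congr 1
  rw [Ideal.Quotient.eq, ← Finset.sum_sub_distrib]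
  refine Ideal.sum_mem _ fun a _ => ?_
  rw [← mul_sub]
  exact Ideal.mul_mem_left _ _ (Ideal.subset_span ⟨a, rfl⟩)

theorem pair_eq {j k j' k' : Fin n} (hjk : j < k) (h'' : j' < k') :
    ((Finsupp.single j' 1 + Finsupp.single k' 1 : Fin n →₀ ℕ)
      = Finsupp.single j 1 + Finsupp.single k 1) ↔ (j' = j ∧ k' = k) := by
  constructor
  · intro h
    have e : ∀ (a b : Fin n), a < b →
        (Finsupp.single a 1 + Finsupp.single b 1 : Fin n →₀ ℕ).support = {a, b} := by
      intro a b hab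
      rw [Finsupp.support_add_eq, Finsupp.support_single_ne_zero _ one_ne_zero,
        Finsupp.support_single_ne_zero _ one_ne_zero]
      · ext x; simp
      · rw [Finsupp.support_single_ne_zero _ one_ne_zero,
          Finsupp.support_single_ne_zero _ one_ne_zero]
        simp [hab.ne]
    have hs : ({j', k'} : Finset (Fin n)) = {j, k} := by
      rw [← e _ _ h'', ← e _ _ hjk, h]
    have hj' : j' = j ∨ j' = k := by
      have hm : j' ∈ ({j, k} : Finset (Fin n)) := by rw [← hs]; simp
      simpa using hm
    have hk' : k' = j ∨ k' = k := by
      have hm : k' ∈ ({j, k} : Finset (Fin n)) := by rw [← hs]; simp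
      simpa using hm
    rcases hj' with rfl | rfl
    · rcases hk' with rfl | rfl
      · exact absurd h'' (lt_irrefl _)
      · exact ⟨rfl, rfl⟩
    · rcases hk' with rfl | rfl
      · exact absurd (hjk.trans h'') (lt_irrefl _)
      · exact absurd h'' (lt_irrefl _)
  · rintro ⟨rfl, rfl⟩
    rfl

theorem ne_sq {i p t : Fin n} (hpi : p ≠ i) :
    (Finsupp.single i 1 + Finsupp.single p 1 : Fin n →₀ ℕ) ≠ Finsupp.single t 2 := by
  intro h
  have h1 := DFunLike.congr_fun h i
  simp only [Finsupp.add_apply, Finsupp.single_apply] at h1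
  rw [if_pos trivial, if_neg hpi] at h1
  split_ifs at h1 <;> omega

theorem sq_ne_pair {i j k : Fin n} (hjk : j ≠ k) :
    (Finsupp.single i 2 : Fin n →₀ ℕ) ≠ Finsupp.single j 1 + Finsupp.single k 1 := by
  intro h
  have h1 := DFunLike.congr_fun h j
  simp only [Finsupp.add_apply, Finsupp.single_apply] at h1
  rw [if_pos trivial, if_neg (fun hh : k = j => hjk hh.symm)] at h1
  split_ifs at h1 <;> omega

/-- the generator of the ideal -/
noncomputable def genp (i : Fin n) : MvPolynomial (Fin n) (ZMod 2) :=
  X i ^ 2 - ∑ p ∈ Finset.univ.filter (fun p => p < i), C (c p i) * (X i * X p)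

theorem genp_hom (i : Fin n) : (genp c i).IsHomogeneous 2 := by
  refine MvPolynomial.IsHomogeneous.sub (isHomogeneous_X_pow _ _) ?_
  refine (mem_homogeneousSubmodule _ _).mp (Submodule.sum_mem _ fun p _ =>
    (mem_homogeneousSubmodule _ _).mpr ?_)
  exact (isHomogeneous_C _ _).mul ((isHomogeneous_X _ _).mul (isHomogeneous_X _ _))

theorem psi_gen (j k i : Fin n) (hjk : j < k) :
    coeff (Finsupp.single j 1 + Finsupp.single k 1) (genp c i)
      + c j k * coeff (Finsupp.single k 2) (genp c i) = 0 := by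
  have h1 : coeff (Finsupp.single j 1 + Finsupp.single k 1)
      ((X i : MvPolynomial (Fin n) (ZMod 2)) ^ 2) = 0 := by
    rw [X_pow_eq_monomial, coeff_monomial, if_neg (sq_ne_pair hjk.ne)]
  have h2 : coeff (Finsupp.single k 2) ((X i : MvPolynomial (Fin n) (ZMod 2)) ^ 2)
      = if i = k then 1 else 0 := by
    rw [X_pow_eq_monomial, coeff_monomial]
    by_cases hik : i = k
    · subst hik
      rw [if_pos rfl, if_pos rfl]
    · rw [if_neg (fun h => hik ((Finsupp.single_left_inj (by norm_num : (2:ℕ) ≠ 0)).mp h)),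
        if_neg hik]
  have h3 : coeff (Finsupp.single j 1 + Finsupp.single k 1)
      (∑ p ∈ Finset.univ.filter (fun p => p < i), C (c p i) * (X i * X p))
      = if i = k then c j k else 0 := by
    rw [MvPolynomial.coeff_sum]
    by_cases hik : i = k
    · rw [if_pos hik, hik]
      have hterm : ∀ p ∈ Finset.univ.filter (fun p => p < k),
          coeff (Finsupp.single j 1 + Finsupp.single k 1) (C (c p k) * (X k * X p))
            = if p = j then c p k else 0 := by
        intro p hp
        have hpk : p < k := (Finset.mem_filter.mp hp).2
        rw [CXX, coeff_monomial, add_comm (Finsupp.single k 1) (Finsupp.single p 1)]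
        exact if_congr ⟨fun h => ((pair_eq hjk hpk).mp h).1,
          fun h => (pair_eq hjk hpk).mpr ⟨h, rfl⟩⟩ rfl rfl
      rw [Finset.sum_congr rfl hterm, Finset.sum_ite_eq']
      exact if_pos (show j ∈ Finset.univ.filter (fun p => p < k) from
        Finset.mem_filter.mpr ⟨Finset.mem_univ _, hjk⟩)
    · rw [if_neg hik]
      refine Finset.sum_eq_zero fun p hp => ?_
      have hpi : p < i := (Finset.mem_filter.mp hp).2
      rw [CXX, coeff_monomial, add_comm (Finsupp.single i 1) (Finsupp.single p 1)]
      exact if_neg (fun h => hik ((pair_eq hjk hpi).mp h).2)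
  have h4 : coeff (Finsupp.single k 2)
      (∑ p ∈ Finset.univ.filter (fun p => p < i), C (c p i) * (X i * X p)) = 0 := by
    rw [MvPolynomial.coeff_sum]
    refine Finset.sum_eq_zero fun p hp => ?_
    have hpi : p < i := (Finset.mem_filter.mp hp).2
    rw [CXX, coeff_monomial, if_neg (ne_sq hpi.ne)]
  unfold genp
  rw [coeff_sub, coeff_sub, h1, h2, h3, h4]
  by_cases hik : i = k <;> simp [hik] <;> exact CharTwo.add_self_eq_zero _

theorem psi_ideal (x : MvPolynomial (Fin n) (ZMod 2)) (hx : x ∈ bottIdeal n c)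
    (j k : Fin n) (hjk : j < k) :
    coeff (Finsupp.single j 1 + Finsupp.single k 1) x
      + c j k * coeff (Finsupp.single k 2) x = 0 := by
  obtain ⟨f, hsup, hsum⟩ := Submodule.mem_span_set.mp hx
  rw [← hsum, Finsupp.sum, MvPolynomial.coeff_sum, MvPolynomial.coeff_sum, Finset.mul_sum,
    ← Finset.sum_add_distrib]
  refine Finset.sum_eq_zero fun g hg => ?_
  obtain ⟨i, hgi⟩ := hsup (Finset.mem_coe.mpr hg)
  have hgen : g = genp c i := hgi
  have hd1 : (Finsupp.single j 1 + Finsupp.single k 1 : Fin n →₀ ℕ).degree = 2 := by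
    rw [degree_add', degree_single', degree_single']
  have hd2 : (Finsupp.single k 2 : Fin n →₀ ℕ).degree = 2 := degree_single' _ _
  rw [hgen, smul_eq_mul, coeff_mul_homog2 (genp_hom c i) _ hd1,
    coeff_mul_homog2 (genp_hom c i) _ hd2, mul_left_comm, ← mul_add,
    psi_gen c j k i hjk, mul_zero]

theorem coeff_q1 (j k : Fin n) (hjk : j < k) (hk2 : k.val + 2 < n) :
    coeff (Finsupp.single j 1 + Finsupp.single k 1)
      (∑ j' : Fin n, ∑ k' ∈ Finset.univ.filter (fun k' => j' < k' ∧ k'.val + 2 < n),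
        C (spinCoeff n c j' k') * (X j' * X k')) = spinCoeff n c j k := by
  have hterm : ∀ j' k' : Fin n, j' < k' →
      coeff (Finsupp.single j 1 + Finsupp.single k 1)
          (C (spinCoeff n c j' k') * (X j' * X k'))
        = if j' = j ∧ k' = k then spinCoeff n c j' k' else 0 := by
    intro j' k' h
    rw [CXX, coeff_monomial]
    exact if_congr (pair_eq hjk h) rfl rfl
  rw [MvPolynomial.coeff_sum]
  rw [Finset.sum_congr rfl fun j' (_ : j' ∈ Finset.univ) => MvPolynomial.coeff_sum _ _ _]
  rw [Fintype.sum_eq_single j (fun j' hj' => Finset.sum_eq_zero fun k' hk' => by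
    rw [hterm j' k' (Finset.mem_filter.mp hk').2.1]
    exact if_neg fun hh => hj' hh.1)]
  have hin : ∀ k' ∈ Finset.univ.filter (fun k' => j < k' ∧ k'.val + 2 < n),
      coeff (Finsupp.single j 1 + Finsupp.single k 1)
          (C (spinCoeff n c j k') * (X j * X k'))
        = if k' = k then spinCoeff n c j k' else 0 := by
    intro k' hk'
    rw [hterm j k' (Finset.mem_filter.mp hk').2.1]
    exact if_congr ⟨fun h => h.2, fun h => ⟨rfl, h⟩⟩ rfl rfl
  rw [Finset.sum_congr rfl hin, Finset.sum_ite_eq']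
  exact if_pos (show k ∈ Finset.univ.filter (fun k' => j < k' ∧ k'.val + 2 < n) from
    Finset.mem_filter.mpr ⟨Finset.mem_univ _, hjk, hk2⟩)

theorem coeff_q2 (k : Fin n) :
    coeff (Finsupp.single k 2)
      (∑ j' : Fin n, ∑ k' ∈ Finset.univ.filter (fun k' => j' < k' ∧ k'.val + 2 < n),
        C (spinCoeff n c j' k') * (X j' * X k')) = 0 := by
  rw [MvPolynomial.coeff_sum]
  refine Finset.sum_eq_zero fun j' _ => ?_
  rw [MvPolynomial.coeff_sum]
  refine Finset.sum_eq_zero fun k' hk' => ?_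
  have h : j' < k' := (Finset.mem_filter.mp hk').2.1
  rw [CXX, coeff_monomial, if_neg (ne_sq (i := j') (p := k') h.ne')]

end Core


/-- Spin criterion for an orientable real Bott tower: under orientability,
`w₂` equals the displayed combination of the basis monomials `y_j y_k`
(`1 ≤ j < k ≤ n-2`), and it vanishes iff all its coefficients vanish. -/
theorem stmt_12 (n : ℕ) (c : Fin n → Fin n → ZMod 2)
    (horient : ∀ i : Fin n, (∑ j ∈ Finset.univ.filter (fun j => i < j), c i j) = 0) :
    Ideal.Quotient.mk (bottIdeal n c)
        (MvPolynomial.homogeneousComponent 2 (bottSW n c)) =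
      Ideal.Quotient.mk (bottIdeal n c)
        (∑ j : Fin n, ∑ k ∈ Finset.univ.filter (fun k => j < k ∧ k.val + 2 < n),
          C (spinCoeff n c j k) * (X j * X k)) ∧
    (Ideal.Quotient.mk (bottIdeal n c)
        (MvPolynomial.homogeneousComponent 2 (bottSW n c)) = 0 ↔
      ∀ j k : Fin n, j < k → k.val + 2 < n → spinCoeff n c j k = 0) := by
  constructor
  · exact part1 c horient
  · constructor
    · intro h j k hjk hk2
      rw [part1 c horient] at h
      have hqI := Ideal.Quotient.eq_zero_iff_mem.mp h
      have hpsi := psi_ideal c _ hqI j k hjk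
      rw [coeff_q1 c j k hjk hk2, coeff_q2 c k, mul_zero, add_zero] at hpsi
      exact hpsi
    · intro h
      rw [part1 c horient]
      have hq : (∑ j : Fin n, ∑ k ∈ Finset.univ.filter (fun k => j < k ∧ k.val + 2 < n),
          C (spinCoeff n c j k) * (X j * X k)) = 0 :=
        Finset.sum_eq_zero fun j _ => Finset.sum_eq_zero fun k hk => by
          obtain ⟨hjk, hk2⟩ := (Finset.mem_filter.mp hk).2
          rw [h j k hjk hk2, map_zero, zero_mul]
      rw [hq, map_zero]
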